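/- Let w : ∏_k A_k → ∏_k X_k be an n-partite process function, n ≥ 2. Then w is causal — i.e., every correlation it generates under arbitrary local strategies is a causal correlation — if and only if both of the following hold: (i) there exists a party k1 whose component is constant, i.e. w_{k1}(a_{∖k1}) = x_{k1}^0 for all a_{∖k1}; and (ii) for every party k1 with constant component and every a_{k1} ∈ A_{k1}, the output-reduced function w^{a_{k1}} : ∏_{j≠k1} A_j → ∏_{j≠k1} X_j is a causal (n−1)-partite process function. -/

import Mathlib

noncomputable section

/-- A (multipartite) process function over an index type `ι`: for every local
intervention `f = (f_k)_k` (each `f_k : X_k → A_k`) there is exactly one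
fixed point `x ∈ ∏_k X_k` with `w (f (x)) = x` (unique fixed-point property). -/
def IsProcessFunction {ι : Type} {A X : ι → Type}
    (w : (∀ k, A k) → ∀ k, X k) : Prop :=
  ∀ f : ∀ k, X k → A k, ∃! x : ∀ k, X k, (w fun k => f k (x k)) = x

/-- `w` is non-self-signaling: its `k`-th component does not depend on the
`k`-th party's own output. -/
def NonSelfSignaling {ι : Type} {A X : ι → Type}
    (w : (∀ k, A k) → ∀ k, X k) : Prop :=
  ∀ (k : ι) (a a' : ∀ j, A j), (∀ j, j ≠ k → a j = a' j) → w a k = w a' k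

/-- Extend a family defined on `{j // j ≠ k}` by a value at `k`. -/
def extendAt {ι : Type} [DecidableEq ι] {A : ι → Type} (k : ι)
    (a : ∀ j : {j : ι // j ≠ k}, A j) (b : A k) : ∀ j, A j :=
  fun j => if h : j = k then cast (congrArg A h).symm b else a ⟨j, h⟩

/-- The `k`-th component of a (non-self-signaling) `w`, as a function
`w_k : ∏_{j ≠ k} A_j → X_k` of the other parties' outputs. -/
def component {ι : Type} [DecidableEq ι] {A X : ι → Type}
    [∀ k, Nonempty (A k)] (w : (∀ k, A k) → ∀ k, X k) (k : ι)
    (a : ∀ j : {j : ι // j ≠ k}, A j) : X k :=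
  w (extendAt k a (Classical.arbitrary (A k))) k

/-- The reduced function `w^{f_k} : ∏_{j≠k} A_j → ∏_{j≠k} X_j`, defined by
`w^{f_k}(a_{∖k}) = w_{∖k}(a_{∖k}, f_k(w_k(a_{∖k})))`. -/
def reducedFn {ι : Type} [DecidableEq ι] {A X : ι → Type}
    [∀ k, Nonempty (A k)] (w : (∀ k, A k) → ∀ k, X k) (k : ι)
    (f : X k → A k) (a : ∀ j : {j : ι // j ≠ k}, A j) :
    ∀ j : {j : ι // j ≠ k}, X j :=
  fun j => w (extendAt k a (f (component w k a))) j

/-- The output-reduced function `w^{a_k}`: the reduced function of the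
constant intervention `f_k ≡ b`, `w^{b}(a_{∖k}) = w_{∖k}(a_{∖k}, b)`. -/
def outputReducedFn {ι : Type} [DecidableEq ι] {A X : ι → Type}
    [∀ k, Nonempty (A k)] (w : (∀ k, A k) → ∀ k, X k) (k : ι) (b : A k) :
    (∀ j : {j : ι // j ≠ k}, A j) → ∀ j : {j : ι // j ≠ k}, X j :=
  reducedFn w k (fun _ => b)
open scoped BigOperators

/-- An `ι`-party correlation with input sets `I k` and output sets `O k`:
pointwise nonnegative and normalized for every joint input. -/
def IsCorrelation {ι : Type} [Fintype ι] [DecidableEq ι] {I O : ι → Type}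
    [∀ k, Fintype (I k)] [∀ k, Fintype (O k)]
    (P : (∀ k, O k) → (∀ k, I k) → ℝ) : Prop :=
  (∀ o i, 0 ≤ P o i) ∧ (∀ i, ∑ o : ∀ k, O k, P o i = 1)

/-- Causal correlations, defined by recursion on the number of parties:
every 1-party correlation is causal; an `n`-party correlation (`n ≥ 2`) is
causal if it decomposes as
`P(o|i) = Σ_k q_k · P_k(o_k|i_k) · P_{k,i_k,o_k}(o_{∖k}|i_{∖k})`
with weights `q_k ≥ 0`, `Σ_k q_k = 1`, 1-party correlations `P_k`, and
`(n−1)`-party causal correlations `P_{k,i_k,o_k}`. -/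
inductive IsCausal :
    ∀ {ι : Type} [Fintype ι] [DecidableEq ι] {I O : ι → Type}
      [∀ k, Fintype (I k)] [∀ k, Fintype (O k)],
      ((∀ k, O k) → (∀ k, I k) → ℝ) → Prop
  | base {ι : Type} [Fintype ι] [DecidableEq ι] {I O : ι → Type}
      [∀ k, Fintype (I k)] [∀ k, Fintype (O k)]
      (hcard : Fintype.card ι = 1)
      (P : (∀ k, O k) → (∀ k, I k) → ℝ) (hP : IsCorrelation P) :
      IsCausal P
  | step {ι : Type} [Fintype ι] [DecidableEq ι] {I O : ι → Type}
      [∀ k, Fintype (I k)] [∀ k, Fintype (O k)]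
      (hcard : 2 ≤ Fintype.card ι)
      (P : (∀ k, O k) → (∀ k, I k) → ℝ) (hP : IsCorrelation P)
      (q : ι → ℝ) (hq : ∀ k, 0 ≤ q k) (hq1 : ∑ k, q k = 1)
      (Pk : ∀ k, O k → I k → ℝ)
      (hPk : ∀ k, (∀ o i, 0 ≤ Pk k o i) ∧ ∀ i : I k, ∑ o : O k, Pk k o i = 1)
      (Q : ∀ k : ι, I k → O k →
        ((∀ j : {j : ι // j ≠ k}, O j) → (∀ j : {j : ι // j ≠ k}, I j) → ℝ))
      (hQ : ∀ k i o, IsCausal (Q k i o))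
      (hdec : ∀ o i, P o i =
        ∑ k, q k * Pk k (o k) (i k) *
          Q k (i k) (o k) (fun j => o j) (fun j => i j)) :
      IsCausal P


/-- A process function `w` is causal if every correlation it generates under
arbitrary local strategies (with arbitrary finite external input/output sets)
is a causal correlation: the generated correlation is
`P(o|i) = Σ_a ∏_k st_k(a_k, o_k | w_k(a_{∖k}), i_k)`. -/
def GeneratesCausal {ι : Type} [Fintype ι] [DecidableEq ι] {A X : ι → Type}
    [∀ k, Fintype (A k)] [∀ k, Nonempty (A k)] [∀ k, Fintype (X k)]
    (w : (∀ k, A k) → ∀ k, X k) : Prop :=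
  ∀ (I O : ι → Type) [∀ k, Fintype (I k)] [∀ k, Nonempty (I k)]
    [∀ k, Fintype (O k)] [∀ k, Nonempty (O k)]
    (st : ∀ k, A k → O k → X k → I k → ℝ),
    (∀ k a o x i, 0 ≤ st k a o x i) →
    (∀ k x i, ∑ a : A k, ∑ o : O k, st k a o x i = 1) →
    IsCausal (fun (o : ∀ k, O k) (i : ∀ k, I k) =>
      ∑ a : ∀ k, A k,
        ∏ k, st k (a k) (o k) (component w k (fun j => a j)) (i k))

section Aux

variable {ι : Type} [DecidableEq ι] {A X : ι → Type}

lemma extendAt_self (k : ι) (a : ∀ j : {j : ι // j ≠ k}, A j) (b : A k) :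
    extendAt k a b k = b := by simp [extendAt]

lemma extendAt_ne (k : ι) (a : ∀ j : {j : ι // j ≠ k}, A j) (b : A k)
    (j : {j : ι // j ≠ k}) : extendAt k a b j.val = a j := by
  simp [extendAt, j.prop]

lemma restrict_extendAt (k : ι) (a : ∀ j : {j : ι // j ≠ k}, A j) (b : A k) :
    (fun j : {j : ι // j ≠ k} => extendAt k a b j.val) = a :=
  funext fun j => extendAt_ne k a b j

lemma IsProcessFunction.nss {w : (∀ k, A k) → ∀ k, X k}
    (hw : IsProcessFunction w) : NonSelfSignaling w := by
  classical
  intro k a a' hagree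
  by_contra hne
  set f : ∀ j, X j → A j :=
    Function.update (fun j (_ : X j) => a j) k
      (fun x => if x = w a k then a' k else a k) with hf
  obtain ⟨x, hx, -⟩ := hw f
  by_cases hxx : x k = w a k
  · have h1 : (fun j => f j (x j)) = a' := by
      funext j
      by_cases hj : j = k
      · subst hj; simp [hf, hxx]
      · simp [hf, Function.update_of_ne hj]; exact hagree j hj
    rw [h1] at hx
    exact hne (by rw [← hxx, ← hx])
  · have h1 : (fun j => f j (x j)) = a := by
      funext j
      by_cases hj : j = k
      · subst hj; simp [hf, hxx]
      · simp [hf, Function.update_of_ne hj]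
    rw [h1] at hx
    exact hxx (by rw [← hx])

lemma component_eq [∀ k, Nonempty (A k)] {w : (∀ k, A k) → ∀ k, X k}
    (hnss : NonSelfSignaling w) (k : ι) (a : ∀ j, A j) :
    component w k (fun j : {j : ι // j ≠ k} => a j.val) = w a k :=
  hnss k _ a fun j hj => extendAt_ne k _ (Classical.arbitrary (A k)) ⟨j, hj⟩

lemma outputReducedFn_apply [∀ k, Nonempty (A k)] (w : (∀ k, A k) → ∀ k, X k)
    (k : ι) (b : A k) (a : ∀ j : {j : ι // j ≠ k}, A j) (j : {j : ι // j ≠ k}) :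
    outputReducedFn w k b a j = w (extendAt k a b) j.val := rfl

lemma isProcessFunction_outputReduced [∀ k, Nonempty (A k)]
    {w : (∀ k, A k) → ∀ k, X k} (hw : IsProcessFunction w) (k : ι) (b : A k) :
    IsProcessFunction (outputReducedFn w k b) := by
  intro g
  set f : ∀ m, X m → A m :=
    extendAt (A := fun m => X m → A m) k (fun j => g j) (fun _ => b) with hfdef
  obtain ⟨x, hx, hxu⟩ := hw f
  have hfk : ∀ xv : X k, f k xv = b := fun xv => by
    rw [hfdef, extendAt_self]
  have hfj : ∀ (j : {j : ι // j ≠ k}) (xv : X j.val), f j.val xv = g j xv :=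
    fun j xv => by rw [hfdef, extendAt_ne]
  have hkey : ∀ y : ∀ m, X m,
      (fun m => f m (y m)) = extendAt k (fun j => g j (y j.val)) b := by
    intro y; funext m
    by_cases hm : m = k
    · subst hm; rw [hfk, extendAt_self]
    · rw [hfj ⟨m, hm⟩ (y m), extendAt_ne k _ b ⟨m, hm⟩]
  refine ⟨fun j => x j.val, ?_, ?_⟩
  · funext j
    show w (extendAt k (fun j' => g j' (x j'.val)) b) j.val = x j.val
    rw [← hkey x, hx]
  · rintro y hy
    set x' : ∀ m, X m :=
      extendAt k y (w (extendAt k (fun j => g j (y j)) b) k) with hx'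
    have hx'j : ∀ j : {j : ι // j ≠ k}, x' j.val = y j := fun j =>
      extendAt_ne k _ _ j
    have harg : (fun j : {j : ι // j ≠ k} => g j (x' j.val)) = fun j => g j (y j) := by
      funext j; rw [hx'j]
    have h2 : (fun m => f m (x' m)) = extendAt k (fun j => g j (y j)) b := by
      rw [hkey x', harg]
    have h3 : w (fun m => f m (x' m)) = x' := by
      rw [h2]
      funext m
      by_cases hm : m = k
      · subst hm; rw [hx', extendAt_self]
      · have hcf := congrFun hy ⟨m, hm⟩
        rw [show x' m = y ⟨m, hm⟩ from hx'j ⟨m, hm⟩]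
        exact hcf
    have hx'x := hxu x' h3
    funext j
    rw [← hx'j j, hx'x]

end Aux
section CausalBasic

lemma single_le_one' {α : Type*} [Fintype α] {f : α → ℝ} (h0 : ∀ x, 0 ≤ f x)
    (h1 : ∑ x, f x = 1) (a : α) : f a ≤ 1 :=
  h1 ▸ Finset.single_le_sum (fun i _ => h0 i) (Finset.mem_univ a)

variable {ι : Type} [Fintype ι] [DecidableEq ι] {I O : ι → Type}
  [∀ k, Fintype (I k)] [∀ k, Fintype (O k)]

lemma IsCausal.isCorrelation {P : (∀ k, O k) → (∀ k, I k) → ℝ}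
    (h : IsCausal P) : IsCorrelation P := by
  cases h with
  | base _ _ hP => exact hP
  | step _ _ hP => exact hP

lemma IsCausal.one_le_card {P : (∀ k, O k) → (∀ k, I k) → ℝ}
    (h : IsCausal P) : 1 ≤ Fintype.card ι := by
  cases h with
  | base hcard => omega
  | step hcard => omega

lemma isCausal_step_inv {P : (∀ k, O k) → (∀ k, I k) → ℝ}
    (hcard : 2 ≤ Fintype.card ι) (h : IsCausal P) :
    ∃ (q : ι → ℝ) (Pk : ∀ k, O k → I k → ℝ)
      (Q : ∀ k : ι, I k → O k →
        ((∀ j : {j : ι // j ≠ k}, O j) → (∀ j : {j : ι // j ≠ k}, I j) → ℝ)),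
      (∀ k, 0 ≤ q k) ∧ (∑ k, q k) = 1 ∧
      (∀ k, (∀ o i, 0 ≤ Pk k o i) ∧ ∀ i : I k, ∑ o : O k, Pk k o i = 1) ∧
      (∀ k i o, IsCausal (Q k i o)) ∧
      (∀ o i, P o i = ∑ k, q k * Pk k (o k) (i k) *
          Q k (i k) (o k) (fun j => o j) (fun j => i j)) := by
  cases h with
  | base hc => omega
  | step hc P hP q hq hq1 Pk hPk Q hQ hdec => exact ⟨q, Pk, Q, hq, hq1, hPk, hQ, hdec⟩

lemma card_subtype_ne (k : ι) :
    Fintype.card {j : ι // j ≠ k} = Fintype.card ι - 1 := by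
  have := Fintype.card_subtype_compl (fun j : ι => j = k)
  simpa [Fintype.card_subtype_eq] using this

lemma prod_split (k : ι) (f : ι → ℝ) :
    ∏ m, f m = f k * ∏ j : {j : ι // j ≠ k}, f j.val := by
  rw [Fintype.prod_eq_mul_prod_compl k f]
  congr 1
  exact (Finset.prod_subtype {k}ᶜ (by simp) f)

lemma piSplitAt_symm_eq_extendAt {B : ι → Type} (k : ι) (c : B k)
    (a : ∀ j : {j : ι // j ≠ k}, B j) :
    (Equiv.piSplitAt k B).symm (c, a) = extendAt k a c := by
  funext m
  rw [Equiv.piSplitAt_symm_apply]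
  unfold extendAt
  by_cases h : m = k
  · subst h; simp
  · simp [h]

lemma sum_pi_split {B : ι → Type} [∀ m, Fintype (B m)] (k : ι)
    (f : (∀ m, B m) → ℝ) :
    ∑ a : ∀ m, B m, f a =
      ∑ c : B k, ∑ a : ∀ j : {j : ι // j ≠ k}, B j, f (extendAt k a c) := by
  rw [← Equiv.sum_comp (Equiv.piSplitAt k B).symm f, Fintype.sum_prod_type]
  exact Finset.sum_congr rfl fun c _ => Finset.sum_congr rfl fun a _ => by
    rw [piSplitAt_symm_eq_extendAt k c a]

end CausalBasic
section ProdConvex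

lemma isCausal_prod : ∀ (N : ℕ) {ι : Type} [Fintype ι] [DecidableEq ι]
    {I O : ι → Type} [∀ k, Fintype (I k)] [∀ k, Fintype (O k)],
    Fintype.card ι ≤ N → 1 ≤ Fintype.card ι →
    ∀ (p : ∀ k, O k → I k → ℝ),
    (∀ k, (∀ o i, 0 ≤ p k o i) ∧ ∀ i : I k, ∑ o : O k, p k o i = 1) →
    IsCausal (fun (o : ∀ k, O k) (i : ∀ k, I k) => ∏ k, p k (o k) (i k)) := by
  intro N
  induction N with
  | zero =>
    intro ι _ _ I O _ _ hle hge
    omega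
  | succ N IH =>
    intro ι instF instD I O iI iO hle hge p hp
    have hcorr : IsCorrelation (fun (o : ∀ k, O k) (i : ∀ k, I k) =>
        ∏ k, p k (o k) (i k)) := by
      constructor
      · intro o i; exact Finset.prod_nonneg fun k _ => (hp k).1 _ _
      · intro i
        have h := Finset.prod_univ_sum (fun k : ι => (Finset.univ : Finset (O k)))
          (fun k ok => p k ok (i k))
        rw [Fintype.piFinset_univ] at h
        rw [← h]
        exact Finset.prod_eq_one fun k _ => (hp k).2 (i k)
    rcases eq_or_lt_of_le hge with h1 | h2
    · exact IsCausal.base h1.symm _ hcorr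
    · have hc2 : 2 ≤ Fintype.card ι := h2
      have hcpos : (0 : ℝ) < (Fintype.card ι : ℝ) := by
        have : 0 < Fintype.card ι := by omega
        exact_mod_cast this
      refine IsCausal.step hc2 _ hcorr (fun _ => (Fintype.card ι : ℝ)⁻¹)
        (fun k => by positivity)
        (by rw [Finset.sum_const, Finset.card_univ, nsmul_eq_mul,
              mul_inv_cancel₀ (ne_of_gt hcpos)])
        p hp
        (fun k i o => fun o' i' => ∏ j : {j : ι // j ≠ k}, p j.val (o' j) (i' j))
        ?_ ?_
      · intro k i o
        have hcard' : Fintype.card {j : ι // j ≠ k} = Fintype.card ι - 1 :=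
          card_subtype_ne k
        exact IH (by omega) (by omega) _
          (fun j => ⟨fun o i => (hp j.val).1 o i, fun i => (hp j.val).2 i⟩)
      · intro o i
        have hsplit : ∀ k : ι,
            p k (o k) (i k) * ∏ j : {j : ι // j ≠ k}, p j.val (o j.val) (i j.val)
              = ∏ m, p m (o m) (i m) :=
          fun k => (prod_split k fun m => p m (o m) (i m)).symm
        calc ∏ m, p m (o m) (i m)
            = ∑ _k : ι, (Fintype.card ι : ℝ)⁻¹ * ∏ m, p m (o m) (i m) := by
              rw [Finset.sum_const, Finset.card_univ, nsmul_eq_mul, ← mul_assoc,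
                mul_inv_cancel₀ (ne_of_gt hcpos), one_mul]
          _ = _ := Finset.sum_congr rfl fun k _ => by
              rw [mul_assoc, hsplit k]

lemma isCausal_convex : ∀ (N : ℕ) {ι : Type} [Fintype ι] [DecidableEq ι]
    {I O : ι → Type} [∀ k, Fintype (I k)] [∀ k, Fintype (O k)],
    Fintype.card ι ≤ N →
    ∀ {T : Type} [Fintype T] (μ : T → ℝ)
      (Pt : T → ((∀ k, O k) → (∀ k, I k) → ℝ)),
    (∀ t, 0 ≤ μ t) → (∑ t, μ t) = 1 → (∀ t, IsCausal (Pt t)) →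
    IsCausal (fun o i => ∑ t, μ t * Pt t o i) := by
  intro N
  induction N with
  | zero =>
    intro ι _ _ I O _ _ hle T _ μ Pt hμ0 hμ1 hcaus
    obtain ⟨t0, -, -⟩ := Finset.exists_ne_zero_of_sum_ne_zero
      (by rw [hμ1]; exact one_ne_zero)
    have := (hcaus t0).one_le_card
    omega
  | succ N IH =>
    intro ι instF instD I O iI iO hle T instT μ Pt hμ0 hμ1 hcaus
    obtain ⟨t0, -, -⟩ := Finset.exists_ne_zero_of_sum_ne_zero
      (f := μ) (s := Finset.univ) (by rw [hμ1]; exact one_ne_zero)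
    have hcorr : IsCorrelation (fun (o : ∀ k, O k) (i : ∀ k, I k) =>
        ∑ t, μ t * Pt t o i) := by
      constructor
      · intro o i
        exact Finset.sum_nonneg fun t _ =>
          mul_nonneg (hμ0 t) ((hcaus t).isCorrelation.1 o i)
      · intro i
        rw [Finset.sum_comm]
        calc ∑ t, ∑ o : ∀ k, O k, μ t * Pt t o i
            = ∑ t, μ t * ∑ o : ∀ k, O k, Pt t o i :=
              Finset.sum_congr rfl fun t _ => (Finset.mul_sum _ _ _).symm
          _ = ∑ t, μ t := Finset.sum_congr rfl fun t _ => by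
              rw [(hcaus t).isCorrelation.2 i, mul_one]
          _ = 1 := hμ1
    by_cases h1 : Fintype.card ι = 1
    · exact IsCausal.base h1 _ hcorr
    · have hc2 : 2 ≤ Fintype.card ι := by
        have := (hcaus t0).one_le_card; omega
      choose q Pk Q hq hq1 hPk hQ hdec using fun t =>
        isCausal_step_inv hc2 (hcaus t)
      set q' : ι → ℝ := fun m => ∑ t, μ t * q t m with hq'def
      have hq'0 : ∀ m, 0 ≤ q' m := fun m =>
        Finset.sum_nonneg fun t _ => mul_nonneg (hμ0 t) (hq t m)
      set Pk' : ∀ m, O m → I m → ℝ := fun m o i =>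
        if q' m = 0 then Pk t0 m o i
        else (∑ t, μ t * q t m * Pk t m o i) / q' m with hPk'def
      have hPk'0 : ∀ m o i, 0 ≤ Pk' m o i := by
        intro m o i
        rw [hPk'def]
        dsimp only
        split
        · exact (hPk t0 m).1 o i
        · exact div_nonneg (Finset.sum_nonneg fun t _ =>
            mul_nonneg (mul_nonneg (hμ0 t) (hq t m)) ((hPk t m).1 o i)) (hq'0 m)
      have hDid : ∀ m o i, q' m * Pk' m o i = ∑ t, μ t * q t m * Pk t m o i := by
        intro m o i
        by_cases hz : q' m = 0
        · rw [hz, zero_mul]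
          symm
          refine Finset.sum_eq_zero fun t _ => ?_
          have hall := (Finset.sum_eq_zero_iff_of_nonneg
            (fun t _ => mul_nonneg (hμ0 t) (hq t m))).1 hz t (Finset.mem_univ t)
          rw [hall, zero_mul]
        · rw [hPk'def]
          dsimp only
          rw [if_neg hz]
          field_simp
      have hPk'corr : ∀ m, (∀ o i, 0 ≤ Pk' m o i) ∧
          ∀ i : I m, ∑ o : O m, Pk' m o i = 1 := by
        intro m
        refine ⟨hPk'0 m, fun i => ?_⟩
        by_cases hz : q' m = 0
        · simp only [hPk'def, hz, if_pos rfl]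
          exact (hPk t0 m).2 i
        · simp only [hPk'def, if_neg hz]
          rw [← Finset.sum_div]
          rw [Finset.sum_comm]
          have : ∀ t, ∑ o : O m, μ t * q t m * Pk t m o i = μ t * q t m := by
            intro t
            rw [← Finset.mul_sum, (hPk t m).2 i, mul_one]
          rw [Finset.sum_congr rfl fun t _ => this t]
          exact div_self hz
      set Q' : ∀ m : ι, I m → O m →
          ((∀ j : {j : ι // j ≠ m}, O j) → (∀ j : {j : ι // j ≠ m}, I j) → ℝ) :=
        fun m i o =>
          if q' m * Pk' m o i = 0 then Q t0 m i o
          else fun o' i' => ∑ t,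
            (μ t * q t m * Pk t m o i / (q' m * Pk' m o i)) * Q t m i o o' i'
        with hQ'def
      have hQ'caus : ∀ m i o, IsCausal (Q' m i o) := by
        intro m i o
        rw [hQ'def]
        dsimp only
        split
        · exact hQ t0 m i o
        · rename_i hz
          have hDpos : 0 ≤ q' m * Pk' m o i := mul_nonneg (hq'0 m) (hPk'0 m o i)
          refine IH ?_ _ _ (fun t => div_nonneg (mul_nonneg
            (mul_nonneg (hμ0 t) (hq t m)) ((hPk t m).1 o i)) hDpos) ?_
            (fun t => hQ t m i o)
          · have := card_subtype_ne m; omega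
          · rw [← Finset.sum_div, ← hDid m o i]
            exact div_self hz
      have hq'sum : ∑ m, q' m = 1 := by
        rw [hq'def]
        dsimp only
        rw [Finset.sum_comm]
        calc ∑ t, ∑ m, μ t * q t m = ∑ t, μ t * ∑ m, q t m :=
              Finset.sum_congr rfl fun t _ => (Finset.mul_sum _ _ _).symm
          _ = 1 := by
              rw [Finset.sum_congr rfl fun t _ => by rw [hq1 t, mul_one]]
              exact hμ1
      refine IsCausal.step hc2 _ hcorr q' hq'0 hq'sum Pk' hPk'corr Q' hQ'caus ?_
      intro o i
      have hterm : ∀ m : ι,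
          q' m * Pk' m (o m) (i m) *
            Q' m (i m) (o m) (fun j => o j) (fun j => i j)
          = ∑ t, μ t * q t m * Pk t m (o m) (i m) *
              Q t m (i m) (o m) (fun j => o j) (fun j => i j) := by
        intro m
        by_cases hz : q' m * Pk' m (o m) (i m) = 0
        · rw [hz, zero_mul]
          symm
          refine Finset.sum_eq_zero fun t _ => ?_
          have h0 := hDid m (o m) (i m)
          rw [hz] at h0
          have hall := (Finset.sum_eq_zero_iff_of_nonneg (fun t _ =>
            mul_nonneg (mul_nonneg (hμ0 t) (hq t m)) ((hPk t m).1 _ _))).1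
            h0.symm t (Finset.mem_univ t)
          rw [hall, zero_mul]
        · rw [hQ'def]
          dsimp only
          rw [if_neg hz, Finset.mul_sum]
          refine Finset.sum_congr rfl fun t _ => ?_
          field_simp
          rw [div_eq_iff hz]; ring
      calc ∑ t, μ t * Pt t o i
          = ∑ t, ∑ m, μ t * (q t m * Pk t m (o m) (i m) *
              Q t m (i m) (o m) (fun j => o j) (fun j => i j)) := by
            refine Finset.sum_congr rfl fun t _ => ?_
            rw [← Finset.mul_sum, hdec t o i]
        _ = ∑ m, ∑ t, μ t * q t m * Pk t m (o m) (i m) *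
              Q t m (i m) (o m) (fun j => o j) (fun j => i j) := by
            rw [Finset.sum_comm]
            exact Finset.sum_congr rfl fun m _ => Finset.sum_congr rfl
              fun t _ => by ring
        _ = _ := (Finset.sum_congr rfl fun m _ => (hterm m).symm)

end ProdConvex
section Transport

lemma isCausal_transport : ∀ (N : ℕ) {ι₂ : Type} [Fintype ι₂] [DecidableEq ι₂]
    {I₂ O₂ : ι₂ → Type} [∀ k, Fintype (I₂ k)] [∀ k, Fintype (O₂ k)]
    {P : (∀ k, O₂ k) → (∀ k, I₂ k) → ℝ}, Fintype.card ι₂ ≤ N → IsCausal P →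
    ∀ {ι₁ : Type} [Fintype ι₁] [DecidableEq ι₁] {I₁ O₁ : ι₁ → Type}
      [∀ k, Fintype (I₁ k)] [∀ k, Fintype (O₁ k)] (e : ι₁ ≃ ι₂)
      (fI : ∀ k, I₁ k ≃ I₂ (e k)) (fO : ∀ k, O₁ k ≃ O₂ (e k)),
      IsCausal (fun (o : ∀ k, O₁ k) (i : ∀ k, I₁ k) =>
        P (Equiv.piCongr e fO o) (Equiv.piCongr e fI i)) := by
  intro N
  induction N with
  | zero =>
    intro ι₂ _ _ I₂ O₂ _ _ P hle h
    have := h.one_le_card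
    omega
  | succ N IH =>
    intro ι₂ instF₂ instD₂ I₂ O₂ iI₂ iO₂ P hle h ι₁ instF₁ instD₁ I₁ O₁ iI₁ iO₁
      e fI fO
    have hcorr1 : IsCorrelation (fun (o : ∀ k, O₁ k) (i : ∀ k, I₁ k) =>
        P (Equiv.piCongr e fO o) (Equiv.piCongr e fI i)) := by
      refine ⟨fun o i => h.isCorrelation.1 _ _, fun i => ?_⟩
      rw [← h.isCorrelation.2 (Equiv.piCongr e fI i)]
      exact Fintype.sum_equiv (Equiv.piCongr e fO) _ _ fun o => rfl
    by_cases h1 : Fintype.card ι₂ = 1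
    · exact IsCausal.base (by rw [Fintype.card_congr e]; exact h1) _ hcorr1
    · have hc2 : 2 ≤ Fintype.card ι₂ := by have := h.one_le_card; omega
      obtain ⟨q, Pk, Q, hq, hq1, hPk, hQ, hdec⟩ := isCausal_step_inv hc2 h
      have hcard1 : 2 ≤ Fintype.card ι₁ := by
        rw [Fintype.card_congr e]; exact hc2
      have hiff : ∀ (k : ι₁) (a : ι₁), a ≠ k ↔ e a ≠ e k := fun k a =>
        not_congr ⟨fun h' => h' ▸ rfl, fun h' => e.injective h'⟩
      set e' := fun k : ι₁ => e.subtypeEquiv (q := fun b => b ≠ e k) (hiff k)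
        with he'
      refine IsCausal.step hcard1 _ hcorr1
        (fun k => q (e k)) (fun k => hq (e k))
        (by rw [← hq1]; exact Fintype.sum_equiv e _ _ fun k => rfl)
        (fun k o i => Pk (e k) (fO k o) (fI k i))
        (fun k => ⟨fun o i => (hPk (e k)).1 _ _, fun i => by
          rw [← (hPk (e k)).2 (fI k i)]
          exact Fintype.sum_equiv (fO k) _ _ fun o => rfl⟩)
        (fun k i o => fun o' i' => Q (e k) (fI k i) (fO k o)
          (Equiv.piCongr (e' k) (fun j => fO j.val) o')
          (Equiv.piCongr (e' k) (fun j => fI j.val) i'))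
        (fun k i o => by
          refine IH ?_ (hQ (e k) (fI k i) (fO k o)) (e' k)
            (fun j => fI j.val) (fun j => fO j.val)
          have := card_subtype_ne (e k)
          omega) ?_
      intro o i
      rw [hdec (Equiv.piCongr e fO o) (Equiv.piCongr e fI i)]
      refine (Fintype.sum_equiv e _ _ fun k₁ => ?_).symm
      have hO1 : (Equiv.piCongr e fO o) (e k₁) = fO k₁ (o k₁) :=
        Equiv.piCongr_apply_apply e fO o k₁
      have hI1 : (Equiv.piCongr e fI i) (e k₁) = fI k₁ (i k₁) :=
        Equiv.piCongr_apply_apply e fI i k₁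
      have hOtail : (fun j : {j : ι₂ // j ≠ e k₁} => (Equiv.piCongr e fO o) j.val)
          = Equiv.piCongr (e' k₁) (fun j => fO j.val) (fun j => o j.val) := by
        funext j₂
        obtain ⟨j₁, rfl⟩ := (e' k₁).surjective j₂
        refine (Equiv.piCongr_apply_apply e fO o j₁.val).trans ?_
        exact (Equiv.piCongr_apply_apply (e' k₁)
          (Z := fun j : {j : ι₂ // j ≠ e k₁} => O₂ j.val)
          (fun j => fO j.val) (fun j => o j.val) j₁).symm
      have hItail : (fun j : {j : ι₂ // j ≠ e k₁} => (Equiv.piCongr e fI i) j.val)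
          = Equiv.piCongr (e' k₁) (fun j => fI j.val) (fun j => i j.val) := by
        funext j₂
        obtain ⟨j₁, rfl⟩ := (e' k₁).surjective j₂
        refine (Equiv.piCongr_apply_apply e fI i j₁.val).trans ?_
        exact (Equiv.piCongr_apply_apply (e' k₁)
          (Z := fun j : {j : ι₂ // j ≠ e k₁} => I₂ j.val)
          (fun j => fI j.val) (fun j => i j.val) j₁).symm
      rw [hO1, hI1, hOtail, hItail]

end Transport
section Removal

variable {ι : Type} [Fintype ι] [DecidableEq ι]

lemma sum_split (k : ι) (f : ι → ℝ) :
    ∑ m, f m = f k + ∑ j : {j : ι // j ≠ k}, f j.val := by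
  rw [Fintype.sum_eq_add_sum_compl k f]
  congr 1
  exact (Finset.sum_subtype {k}ᶜ (by simp) f)

/-- Swap the order of removing two distinct indices. -/
def swapSub (k : ι) (m : {j : ι // j ≠ k}) :
    {j : {j : ι // j ≠ k} // j ≠ m} ≃
    {j : {j : ι // j ≠ m.val} // j ≠ ⟨k, fun hh => m.prop hh.symm⟩} where
  toFun j := ⟨⟨j.val.val, fun hh => j.prop (Subtype.ext hh)⟩,
    fun hh => j.val.prop (congrArg Subtype.val hh)⟩
  invFun j := ⟨⟨j.val.val, fun hh => j.prop (Subtype.ext hh)⟩,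
    fun hh => j.val.prop (congrArg Subtype.val hh)⟩
  left_inv j := Subtype.ext (Subtype.ext rfl)
  right_inv j := Subtype.ext (Subtype.ext rfl)

lemma restr_extend_swap (k : ι) (m : {j : ι // j ≠ k}) {B : ι → Type}
    (o : ∀ j : {j : ι // j ≠ k}, B j) (d : B k) :
    (fun j : {j : ι // j ≠ m.val} => extendAt k o d j.val)
      = extendAt (A := fun j : {j : ι // j ≠ m.val} => B j.val)
          (⟨k, fun hh => m.prop hh.symm⟩ : {j : ι // j ≠ m.val})
          (Equiv.piCongr (swapSub k m) (fun j => Equiv.refl (B j.val.val))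
            (fun j : {j : {j : ι // j ≠ k} // j ≠ m} => o j.val)) d := by
  funext j
  set kk : {j : ι // j ≠ m.val} := ⟨k, fun hh => m.prop hh.symm⟩ with hkkdef
  by_cases hj : j.val = k
  · have hkkm : j = kk := Subtype.ext hj
    rw [hkkm]
    exact (extendAt_self k o d).trans
      (extendAt_self (A := fun j : {j : ι // j ≠ m.val} => B j.val) kk _ d).symm
  · have hne : j ≠ kk := fun hh => hj (congrArg Subtype.val hh)
    have hLHS : extendAt k o d j.val = o ⟨j.val, hj⟩ :=
      extendAt_ne k o d ⟨j.val, hj⟩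
    rw [hLHS]
    refine Eq.symm ((extendAt_ne
      (A := fun j : {j : ι // j ≠ m.val} => B j.val) kk _ d ⟨j, hne⟩).trans ?_)
    have hEj : (⟨j, hne⟩ : {j' : {j : ι // j ≠ m.val} // j' ≠ kk}) =
        swapSub k m ⟨⟨j.val, hj⟩, fun hh => j.prop (congrArg Subtype.val hh)⟩ :=
      Subtype.ext (Subtype.ext rfl)
    exact Equiv.piCongr_apply_apply (swapSub k m) _ _
      ⟨⟨j.val, hj⟩, fun hh => j.prop (congrArg Subtype.val hh)⟩

lemma sum_elim_subsingleton {α : Type} [Fintype α] [Subsingleton α] (a : α)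
    (f : α → ℝ) : ∑ x, f x = f a :=
  calc ∑ x, f x = ∑ _x : α, f a :=
        Finset.sum_congr rfl fun x _ => by rw [Subsingleton.elim x a]
    _ = f a := by
        rw [Finset.sum_const, Finset.card_univ,
          Fintype.card_eq_one_iff.mpr ⟨a, fun y => Subsingleton.elim y a⟩,
          one_smul]

lemma isCausal_removeTrivial : ∀ (N : ℕ) {ι : Type} [Fintype ι] [DecidableEq ι]
    {I O : ι → Type} [∀ m, Fintype (I m)] [∀ m, Fintype (O m)]
    (k : ι) (dI : I k) (dO : O k), Subsingleton (I k) → Subsingleton (O k) →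
    Fintype.card ι ≤ N → 2 ≤ Fintype.card ι →
    ∀ {P : (∀ m, O m) → (∀ m, I m) → ℝ}, IsCausal P →
    IsCausal (fun (o : ∀ j : {j : ι // j ≠ k}, O j)
        (i : ∀ j : {j : ι // j ≠ k}, I j) =>
      P (extendAt k o dO) (extendAt k i dI)) := by
  intro N
  induction N with
  | zero => intro ι _ _ I O _ _ k dI dO _ _ hle hc2; omega
  | succ N IH =>
    intro ι instF instD I O iI iO k dI dO hsI hsO hle hc2 P h
    obtain ⟨q, Pk, Q, hq, hq1, hPk, hQ, hdec⟩ := isCausal_step_inv hc2 h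
    have hPkk : ∀ (c : O k) (d : I k), Pk k c d = 1 := by
      intro c d
      have := (hPk k).2 d
      rwa [sum_elim_subsingleton c] at this
    have hrestr : ∀ (o : ∀ j : {j : ι // j ≠ k}, O j),
        (fun j : {j : ι // j ≠ k} => extendAt k o dO j.val) = o :=
      fun o => restrict_extendAt k o dO
    have hrestrI : ∀ (i : ∀ j : {j : ι // j ≠ k}, I j),
        (fun j : {j : ι // j ≠ k} => extendAt k i dI j.val) = i :=
      fun i => restrict_extendAt k i dI
    have hcorrRes : IsCorrelation (fun (o : ∀ j : {j : ι // j ≠ k}, O j)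
        (i : ∀ j : {j : ι // j ≠ k}, I j) =>
        P (extendAt k o dO) (extendAt k i dI)) := by
      refine ⟨fun o i => h.isCorrelation.1 _ _, fun i => ?_⟩
      have h2 := h.isCorrelation.2 (extendAt k i dI)
      rw [sum_pi_split k] at h2
      rwa [sum_elim_subsingleton dO] at h2
    by_cases hcase : Fintype.card ι = 2
    · refine IsCausal.base ?_ _ hcorrRes
      rw [card_subtype_ne k]; omega
    · have hc3 : 3 ≤ Fintype.card ι := by omega
      set Q' : ∀ m : {j : ι // j ≠ k}, I m.val → O m.val →
          ((∀ j : {j : {j : ι // j ≠ k} // j ≠ m}, O j.val.val) →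
           (∀ j : {j : {j : ι // j ≠ k} // j ≠ m}, I j.val.val) → ℝ) :=
        fun m i o => fun o₁ i₁ => Q m.val i o
          (extendAt (⟨k, fun hh => m.prop hh.symm⟩ : {j : ι // j ≠ m.val})
            (Equiv.piCongr (swapSub k m)
              (fun j => Equiv.refl (O j.val.val)) o₁) dO)
          (extendAt (⟨k, fun hh => m.prop hh.symm⟩ : {j : ι // j ≠ m.val})
            (Equiv.piCongr (swapSub k m)
              (fun j => Equiv.refl (I j.val.val)) i₁) dI) with hQ'def
      have hQ'caus : ∀ m i o, IsCausal (Q' m i o) := by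
        intro m i o
        have hrem := IH (⟨k, fun hh => m.prop hh.symm⟩ : {j : ι // j ≠ m.val})
          dI dO hsI hsO
          (by rw [card_subtype_ne m.val]; omega)
          (by rw [card_subtype_ne m.val]; omega) (hQ m.val i o)
        exact isCausal_transport N
          (by rw [card_subtype_ne
                (⟨k, fun hh => m.prop hh.symm⟩ : {j : ι // j ≠ m.val}),
                card_subtype_ne m.val]
              omega)
          hrem (swapSub k m) (fun j => Equiv.refl (I j.val.val))
          (fun j => Equiv.refl (O j.val.val))
      have hkey : ∀ (o : ∀ j : {j : ι // j ≠ k}, O j)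
          (i : ∀ j : {j : ι // j ≠ k}, I j),
          P (extendAt k o dO) (extendAt k i dI) =
            q k * Q k dI dO o i +
            ∑ m : {j : ι // j ≠ k}, q m.val * Pk m.val (o m) (i m) *
              Q' m (i m) (o m) (fun j => o j.val) (fun j => i j.val) := by
        intro o i
        rw [hdec (extendAt k o dO) (extendAt k i dI)]
        rw [sum_split k]
        congr 1
        · rw [extendAt_self, extendAt_self, hPkk, mul_one, hrestr, hrestrI]
        · refine Finset.sum_congr rfl fun m _ => ?_
          rw [extendAt_ne k o dO m, extendAt_ne k i dI m]
          rw [hQ'def]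
          dsimp only
          rw [restr_extend_swap k m o dO, restr_extend_swap k m i dI]
      -- split according to whether the non-k weight vanishes
      set s : ℝ := ∑ m : {j : ι // j ≠ k}, q m.val with hs
      have hs0 : 0 ≤ s := Finset.sum_nonneg fun m _ => hq m.val
      have hqks : q k + s = 1 := by rw [hs, ← sum_split k q]; exact hq1
      by_cases hsz : s = 0
      · have hqm0 : ∀ m : {j : ι // j ≠ k}, q m.val = 0 := fun m =>
          (Finset.sum_eq_zero_iff_of_nonneg fun m _ => hq m.val).1 hsz m
            (Finset.mem_univ m)
        have heq : (fun (o : ∀ j : {j : ι // j ≠ k}, O j)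
            (i : ∀ j : {j : ι // j ≠ k}, I j) =>
            P (extendAt k o dO) (extendAt k i dI)) = Q k dI dO := by
          funext o i
          rw [hkey o i]
          rw [Finset.sum_eq_zero fun m _ => by rw [hqm0 m, zero_mul, zero_mul]]
          have hqk1 : q k = 1 := by rw [hsz] at hqks; linarith
          rw [hqk1, one_mul, add_zero]
        rw [heq]
        exact hQ k dI dO
      · have hspos : 0 < s := lt_of_le_of_ne hs0 (Ne.symm hsz)
        set T2 : (∀ j : {j : ι // j ≠ k}, O j) →
            (∀ j : {j : ι // j ≠ k}, I j) → ℝ :=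
          fun o i => ∑ m : {j : ι // j ≠ k}, q m.val / s *
            Pk m.val (o m) (i m) *
            Q' m (i m) (o m) (fun j => o j) (fun j => i j) with hT2
        have hinner : ∀ (i : ∀ j : {j : ι // j ≠ k}, I j)
            (m : {j : ι // j ≠ k}),
            ∑ o : ∀ j : {j : ι // j ≠ k}, O j,
              q m.val / s * Pk m.val (o m) (i m) *
                Q' m (i m) (o m) (fun j => o j) (fun j => i j)
            = q m.val / s := by
          intro i m
          rw [sum_pi_split m]
          have hstep1 : ∀ c : O m.val,
              ∑ a : ∀ j : {j : {j : ι // j ≠ k} // j ≠ m}, O j.val.val,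
                q m.val / s * Pk m.val (extendAt (A := fun j : {j : ι // j ≠ k} => O j.val) m a c m) (i m) *
                  Q' m (i m) (extendAt (A := fun j : {j : ι // j ≠ k} => O j.val) m a c m)
                    (fun j => extendAt (A := fun j : {j : ι // j ≠ k} => O j.val) m a c j.val) (fun j => i j)
              = q m.val / s * Pk m.val c (i m) := by
            intro c
            have h1 : ∀ a : ∀ j : {j : {j : ι // j ≠ k} // j ≠ m}, O j.val.val,
                q m.val / s * Pk m.val (extendAt (A := fun j : {j : ι // j ≠ k} => O j.val) m a c m) (i m) *
                  Q' m (i m) (extendAt (A := fun j : {j : ι // j ≠ k} => O j.val) m a c m)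
                    (fun j => extendAt (A := fun j : {j : ι // j ≠ k} => O j.val) m a c j.val) (fun j => i j)
                = q m.val / s * Pk m.val c (i m) *
                    Q' m (i m) c a (fun j => i j) := by
              intro a
              rw [extendAt_self (A := fun j : {j : ι // j ≠ k} => O j.val) m a c, restrict_extendAt (A := fun j : {j : ι // j ≠ k} => O j.val) m a c]
            rw [Finset.sum_congr rfl fun a _ => h1 a, ← Finset.mul_sum,
              (hQ'caus m (i m) c).isCorrelation.2 (fun j => i j), mul_one]
          rw [Finset.sum_congr rfl fun c _ => hstep1 c, ← Finset.mul_sum,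
            (hPk m.val).2 (i m), mul_one]
        have hT2corr : IsCorrelation T2 := by
          constructor
          · intro o i
            refine Finset.sum_nonneg fun m _ => ?_
            exact mul_nonneg (mul_nonneg (div_nonneg (hq m.val) hs0)
              ((hPk m.val).1 _ _)) ((hQ'caus m _ _).isCorrelation.1 _ _)
          · intro i
            rw [hT2]
            dsimp only
            rw [Finset.sum_comm]
            rw [Finset.sum_congr rfl fun m _ => hinner i m, ← Finset.sum_div]
            rw [← hs]
            exact div_self hsz
        have hT2caus : IsCausal T2 := by
          refine IsCausal.step ?_ _ hT2corr (fun m => q m.val / s)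
            (fun m => div_nonneg (hq m.val) hs0)
            (by rw [← Finset.sum_div, ← hs]; exact div_self hsz)
            (fun m => Pk m.val) (fun m => hPk m.val) Q' hQ'caus
            (fun o i => rfl)
          rw [card_subtype_ne k]; omega
        have hfinal : (fun (o : ∀ j : {j : ι // j ≠ k}, O j)
            (i : ∀ j : {j : ι // j ≠ k}, I j) =>
            P (extendAt k o dO) (extendAt k i dI)) =
            fun o i => ∑ t : Bool,
              (match t with | true => q k | false => s) *
              (match t with
                | true => (fun o i => Q k dI dO o i)
                | false => T2) o i := by
          funext o i
          rw [hkey o i, Fintype.sum_bool]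
          congr 1
          rw [hT2]
          dsimp only
          rw [Finset.mul_sum]
          refine Finset.sum_congr rfl fun m _ => ?_
          field_simp
        rw [hfinal]
        refine isCausal_convex (Fintype.card {j : ι // j ≠ k}) le_rfl
          _ _ ?_ ?_ ?_
        · intro t; cases t
          · exact hs0
          · exact hq k
        · rw [Fintype.sum_bool]; exact hqks
        · intro t; cases t
          · exact hT2caus
          · exact hQ k dI dO

end Removal
section GenCorr

variable {ι : Type} [Fintype ι] [DecidableEq ι] {A X : ι → Type}

lemma unique_interv {w : (∀ k, A k) → ∀ k, X k} (hw : IsProcessFunction w)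
    (f : ∀ m, X m → A m) :
    ∃! a : ∀ m, A m, ∀ m, a m = f m (w a m) := by
  obtain ⟨x, hx, hxu⟩ := hw f
  have hwa : w (fun m => f m (x m)) = x := hx
  refine ⟨fun m => f m (x m), fun m => by rw [hwa], ?_⟩
  rintro a ha
  have h1 : a = fun m => f m (w a m) := funext ha
  have h2 : w (fun m => f m ((w a) m)) = w a := by rw [← h1]
  have h3 : w a = x := hxu (w a) h2
  rw [h1]
  funext m
  rw [h3]

open Classical in
lemma sum_indicator_interv [∀ k, Fintype (A k)]
    {w : (∀ k, A k) → ∀ k, X k} (hw : IsProcessFunction w)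
    (f : ∀ m, X m → A m) :
    ∑ a : ∀ m, A m,
      (if (∀ m, a m = f m (w a m)) then (1 : ℝ) else 0) = 1 := by
  classical
  obtain ⟨a0, ha0, ha0u⟩ := unique_interv hw f
  calc ∑ a : ∀ m, A m, (if (∀ m, a m = f m (w a m)) then (1 : ℝ) else 0)
      = ∑ a : ∀ m, A m, (if a = a0 then (1 : ℝ) else 0) := by
        refine Finset.sum_congr rfl fun a _ => ?_
        refine if_congr ⟨fun h => ha0u a h, fun h => h ▸ ha0⟩ rfl rfl
    _ = 1 := by rw [Finset.sum_ite_eq' Finset.univ a0 (fun _ => (1 : ℝ))]; simp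

lemma gen_isCorrelation [∀ k, Fintype (A k)] [∀ k, Nonempty (A k)]
    [∀ k, Fintype (X k)]
    {w : (∀ k, A k) → ∀ k, X k} (hw : IsProcessFunction w)
    {I O : ι → Type} [∀ k, Fintype (I k)] [∀ k, Fintype (O k)]
    (st : ∀ k, A k → O k → X k → I k → ℝ)
    (h0 : ∀ k a o x i, 0 ≤ st k a o x i)
    (h1 : ∀ k x i, ∑ a : A k, ∑ o : O k, st k a o x i = 1) :
    IsCorrelation (fun (o : ∀ k, O k) (i : ∀ k, I k) =>
      ∑ a : ∀ k, A k,
        ∏ k, st k (a k) (o k) (component w k (fun j => a j)) (i k)) := by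
  classical
  constructor
  · intro o i
    exact Finset.sum_nonneg fun a _ => Finset.prod_nonneg fun k _ => h0 _ _ _ _ _
  · intro i
    rw [Finset.sum_comm]
    set p : ∀ k, A k → X k → ℝ := fun k c x => ∑ o : O k, st k c o x (i k)
      with hpdef
    have hps : ∀ k x, ∑ c : A k, p k c x = 1 := fun k x => h1 k x (i k)
    have hp0 : ∀ k c x, 0 ≤ p k c x := fun k c x =>
      Finset.sum_nonneg fun o _ => h0 _ _ _ _ _
    have hcomp : ∀ (a : ∀ k, A k) (k : ι),
        component w k (fun j : {j : ι // j ≠ k} => a j.val) = w a k :=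
      fun a k => component_eq hw.nss k a
    have hstep : ∀ a : ∀ k, A k,
        (∑ o : ∀ k, O k,
          ∏ k, st k (a k) (o k) (component w k (fun j => a j)) (i k))
        = ∏ k, p k (a k) (w a k) := by
      intro a
      have hps2 := Finset.prod_univ_sum (fun k : ι => (Finset.univ : Finset (O k)))
        (fun k ok => st k (a k) ok (component w k (fun j => a j)) (i k))
      rw [Fintype.piFinset_univ] at hps2
      rw [← hps2]
      refine Finset.prod_congr rfl fun k _ => ?_
      rw [hcomp a k]
    rw [Finset.sum_congr rfl fun a _ => hstep a]
    -- decompose each local channel as a mixture of deterministic functions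
    set wgt : ∀ k, (X k → A k) → ℝ := fun k f => ∏ x : X k, p k (f x) x
      with hwgtdef
    have hwgtsum : ∀ k, ∑ f : X k → A k, wgt k f = 1 := by
      intro k
      have h2 := Finset.prod_univ_sum (fun x : X k => (Finset.univ : Finset (A k)))
        (fun x c => p k c x)
      rw [Fintype.piFinset_univ] at h2
      rw [hwgtdef]
      dsimp only
      rw [← h2]
      exact Finset.prod_eq_one fun x _ => hps k x
    have hdecomp : ∀ (k : ι) (c : A k) (x : X k),
        p k c x = ∑ f : X k → A k, wgt k f * (if c = f x then 1 else 0) := by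
      intro k c x
      rw [sum_pi_split (ι := X k) (B := fun _ => A k) x
        (fun f => wgt k f * (if c = f x then 1 else 0))]
      have hterm : ∀ c' : A k,
          (∑ g : ∀ x' : {x' : X k // x' ≠ x}, A k,
            wgt k (extendAt (A := fun _ : X k => A k) x g c') * (if c = extendAt (A := fun _ : X k => A k) x g c' x then 1 else 0))
          = (if c' = c then
              ∑ g : ∀ x' : {x' : X k // x' ≠ x}, A k, wgt k (extendAt (A := fun _ : X k => A k) x g c')
            else 0) := by
        intro c'
        by_cases hc : c' = c
        · subst hc
          rw [if_pos rfl]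
          refine Finset.sum_congr rfl fun g _ => ?_
          rw [extendAt_self (A := fun _ : X k => A k) x g c', if_pos rfl, mul_one]
        · rw [if_neg hc]
          refine Finset.sum_eq_zero fun g _ => ?_
          rw [extendAt_self (A := fun _ : X k => A k) x g c',
            if_neg (fun hh => hc (by rw [hh])), mul_zero]
      rw [Finset.sum_congr rfl fun c' _ => hterm c']
      rw [Finset.sum_ite_eq' Finset.univ c
        (fun c' => ∑ g : ∀ x' : {x' : X k // x' ≠ x}, A k, wgt k (extendAt (A := fun _ : X k => A k) x g c'))]
      rw [if_pos (Finset.mem_univ c)]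
      have hwext : ∀ g : ∀ x' : {x' : X k // x' ≠ x}, A k,
          wgt k (extendAt (A := fun _ : X k => A k) x g c) = p k c x * ∏ x' : {x' : X k // x' ≠ x},
            p k (g x') x'.val := by
        intro g
        rw [hwgtdef]
        dsimp only
        rw [prod_split x (fun x' => p k (extendAt (A := fun _ : X k => A k) x g c x') x'), extendAt_self]
        congr 1
        refine Finset.prod_congr rfl fun x' _ => ?_
        rw [extendAt_ne (A := fun _ : X k => A k) x g c x']
      rw [Finset.sum_congr rfl fun g _ => hwext g, ← Finset.mul_sum]
      have h3 := Finset.prod_univ_sum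
        (fun x' : {x' : X k // x' ≠ x} => (Finset.univ : Finset (A k)))
        (fun x' c' => p k c' x'.val)
      rw [Fintype.piFinset_univ] at h3
      rw [← h3, Finset.prod_eq_one fun x' _ => hps k x'.val, mul_one]
    calc ∑ a : ∀ k, A k, ∏ k, p k (a k) (w a k)
        = ∑ a : ∀ k, A k, ∑ F : ∀ k, X k → A k,
            ∏ k, (wgt k (F k) * (if a k = F k (w a k) then 1 else 0)) := by
          refine Finset.sum_congr rfl fun a _ => ?_
          have h4 := Finset.prod_univ_sum
            (fun k : ι => (Finset.univ : Finset (X k → A k)))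
            (fun k f => wgt k f * (if a k = f (w a k) then 1 else 0))
          rw [Fintype.piFinset_univ] at h4
          rw [← h4]
          exact Finset.prod_congr rfl fun k _ => hdecomp k (a k) (w a k)
      _ = ∑ F : ∀ k, X k → A k, (∏ k, wgt k (F k)) *
            ∑ a : ∀ k, A k, (if (∀ k, a k = F k (w a k)) then (1 : ℝ) else 0) := by
          rw [Finset.sum_comm]
          refine Finset.sum_congr rfl fun F _ => ?_
          rw [Finset.mul_sum]
          refine Finset.sum_congr rfl fun a _ => ?_
          rw [Finset.prod_mul_distrib, Finset.prod_boole]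
          congr 1
          simp
      _ = ∑ F : ∀ k, X k → A k, ∏ k, wgt k (F k) := by
          refine Finset.sum_congr rfl fun F _ => ?_
          rw [sum_indicator_interv hw F, mul_one]
      _ = 1 := by
          have h5 := Finset.prod_univ_sum
            (fun k : ι => (Finset.univ : Finset (X k → A k)))
            (fun k f => wgt k f)
          rw [Fintype.piFinset_univ] at h5
          rw [← h5]
          exact Finset.prod_eq_one fun k _ => hwgtsum k

end GenCorr

lemma cast_roundtrip {α β : Type} (h : α = β) (x : β) : cast h (cast h.symm x) = x := by
  cases h; rfl

/-- **Characterization of causal process functions** (Theorem 2): an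
`n`-partite process function `w` is causal iff (i) some party `k₁` has a
constant component `w_{k₁}`, and (ii) for every such party `k₁` and every
output value `a_{k₁}`, the output-reduced function `w^{a_{k₁}}` is a causal
`(n−1)`-partite process function. -/
theorem causal_processFunction_characterization
    {n : ℕ} (hn : 2 ≤ n)
    (A X : Fin n → Type) [∀ k, Fintype (A k)] [∀ k, Nonempty (A k)]
    [∀ k, Fintype (X k)] [∀ k, Nonempty (X k)]
    (w : (∀ k, A k) → ∀ k, X k) (hw : IsProcessFunction w) :
    GeneratesCausal w ↔
      ((∃ (k : Fin n) (x0 : X k), ∀ a, component w k a = x0) ∧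
        (∀ k : Fin n, (∃ x0 : X k, ∀ a, component w k a = x0) →
          ∀ b : A k,
            IsProcessFunction (outputReducedFn w k b) ∧
              GeneratesCausal (outputReducedFn w k b))) := by
  have nss := hw.nss
  constructor
  · intro G
    classical
    constructor
    · -- (i) some party has a constant component
      set Ifam : Fin n → Type := fun m => X m → A m with hIfam
      set st : ∀ m : Fin n, A m → X m → X m → (X m → A m) → ℝ :=
        fun m a o x f => if (a = f x ∧ o = x) then 1 else 0 with hstdef
      have hst0 : ∀ m a o x f, 0 ≤ st m a o x f := by
        intro m a o x f
        rw [hstdef]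
        dsimp only
        split <;> norm_num
      have hst1 : ∀ m x f, ∑ a : A m, ∑ o : X m, st m a o x f = 1 := by
        intro m x f
        have hin : ∀ a : A m,
            (∑ o : X m, st m a o x f) = if a = f x then 1 else 0 := by
          intro a
          by_cases h : a = f x
          · rw [if_pos h]
            rw [hstdef]
            dsimp only
            rw [Finset.sum_congr rfl fun o _ =>
              if_congr (⟨fun hc => hc.2, fun hc => ⟨h, hc⟩⟩ :
                (a = f x ∧ o = x) ↔ o = x) rfl rfl]
            rw [Finset.sum_ite_eq' Finset.univ x (fun _ => (1 : ℝ))]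
            simp
          · rw [if_neg h]
            rw [hstdef]
            dsimp only
            exact Finset.sum_eq_zero fun o _ => by
              rw [if_neg (fun hc => h hc.1)]
        rw [Finset.sum_congr rfl fun a _ => hin a,
          Finset.sum_ite_eq' Finset.univ (f x) (fun _ => (1 : ℝ))]
        simp
      have hIC := G Ifam X st hst0 hst1
      -- the generated correlation is the point mass at the unique fixed point
      set xst : (∀ m : Fin n, X m → A m) → (∀ m, X m) :=
        fun f => (hw f).choose with hxst
      have hxfix : ∀ f, w (fun m => f m (xst f m)) = xst f :=
        fun f => (hw f).choose_spec.1
      have hxuniq : ∀ f y, w (fun m => f m (y m)) = y → y = xst f :=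
        fun f y hy => (hw f).choose_spec.2 y hy
      have hPgen : ∀ (o : ∀ m, X m) (f : ∀ m, Ifam m),
          (∑ a : ∀ m, A m,
            ∏ m, st m (a m) (o m) (component w m (fun j => a j)) (f m))
          = if o = xst f then 1 else 0 := by
        intro o f
        have hcond : ∀ a : ∀ m, A m,
            (∀ m, a m = f m (w a m) ∧ o m = w a m) ↔
            (a = (fun m => f m (xst f m)) ∧ o = xst f) := by
          intro a
          constructor
          · intro h
            have h1 : a = fun m => f m (w a m) := funext fun m => (h m).1
            have h2 : w (fun m => f m ((w a) m)) = w a := by rw [← h1]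
            have h3 : w a = xst f := hxuniq f (w a) h2
            constructor
            · rw [h1]; funext m; rw [h3]
            · funext m
              rw [(h m).2, h3]
          · rintro ⟨rfl, rfl⟩
            intro m
            constructor
            · rw [hxfix f]
            · rw [hxfix f]
        calc (∑ a : ∀ m, A m,
              ∏ m, st m (a m) (o m) (component w m (fun j => a j)) (f m))
            = ∑ a : ∀ m, A m,
              if (a = (fun m => f m (xst f m)) ∧ o = xst f) then 1 else 0 := by
              refine Finset.sum_congr rfl fun a _ => ?_
              rw [hstdef]
              dsimp only
              rw [Finset.prod_congr rfl fun m _ => by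
                rw [component_eq nss m a]]
              by_cases hC : (a = (fun m => f m (xst f m)) ∧ o = xst f)
              · rw [if_pos hC]
                exact Finset.prod_eq_one fun m _ =>
                  if_pos ((hcond a).2 hC m)
              · rw [if_neg hC]
                have hnall : ¬ ∀ m, (a m = f m (w a m) ∧ o m = w a m) :=
                  fun hall => hC ((hcond a).1 hall)
                obtain ⟨m, hm⟩ := not_forall.1 hnall
                exact Finset.prod_eq_zero (Finset.mem_univ m) (if_neg hm)
          _ = if o = xst f then 1 else 0 := by
              by_cases ho : o = xst f
              · rw [if_pos ho]
                rw [Finset.sum_congr rfl fun a _ =>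
                  if_congr (⟨fun hc => hc.1, fun hc => ⟨hc, ho⟩⟩ :
                    ((a = fun m => f m (xst f m)) ∧ o = xst f) ↔
                      (a = fun m => f m (xst f m))) rfl rfl]
                rw [Finset.sum_ite_eq' Finset.univ
                  (fun m => f m (xst f m)) (fun _ => (1 : ℝ))]
                simp
              · rw [if_neg ho]
                exact Finset.sum_eq_zero fun a _ => by
                  rw [if_neg (fun hc => ho hc.2)]
      obtain ⟨q, Pk, Q, hq, hq1, hPk, hQc, hdec⟩ :=
        isCausal_step_inv (by rw [Fintype.card_fin]; exact hn) hIC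
      obtain ⟨k, -, hqk0⟩ := Finset.exists_ne_zero_of_sum_ne_zero
        (f := q) (s := Finset.univ) (by rw [hq1]; exact one_ne_zero)
      have hqk : 0 < q k := lt_of_le_of_ne (hq k) (Ne.symm hqk0)
      have hkey : ∀ f : ∀ m, Ifam m, Pk k (xst f k) (f k) = 1 := by
        intro f
        have htermnn : ∀ (o : ∀ m, X m) (m : Fin n),
            0 ≤ q m * Pk m (o m) (f m) *
              Q m (f m) (o m) (fun j => o j) (fun j => f j) :=
          fun o m => mul_nonneg (mul_nonneg (hq m) ((hPk m).1 _ _))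
            ((hQc m _ _).isCorrelation.1 _ _)
        have hterm0 : ∀ o : ∀ m, X m, o ≠ xst f →
            q k * Pk k (o k) (f k) *
              Q k (f k) (o k) (fun j => o j) (fun j => f j) = 0 := by
          intro o ho
          have h0 : (∑ m, q m * Pk m (o m) (f m) *
              Q m (f m) (o m) (fun j => o j) (fun j => f j)) = 0 := by
            rw [← hdec o f, hPgen o f, if_neg ho]
          exact (Finset.sum_eq_zero_iff_of_nonneg
            (fun m _ => htermnn o m)).1 h0 k (Finset.mem_univ k)
        have hsum : (∑ o : ∀ m, X m, q k * Pk k (o k) (f k) *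
            Q k (f k) (o k) (fun j => o j) (fun j => f j)) = q k := by
          rw [sum_pi_split k]
          have hin : ∀ c : X k,
              (∑ o' : ∀ j : {j : Fin n // j ≠ k}, X j,
                q k * Pk k (extendAt k o' c k) (f k) *
                  Q k (f k) (extendAt k o' c k)
                    (fun j => extendAt k o' c j.val) (fun j => f j))
              = q k * Pk k c (f k) := by
            intro c
            rw [Finset.sum_congr rfl fun o' _ => by
              rw [extendAt_self k o' c, restrict_extendAt k o' c]]
            rw [← Finset.mul_sum,
              (hQc k (f k) c).isCorrelation.2 (fun j => f j), mul_one]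
          rw [Finset.sum_congr rfl fun c _ => hin c, ← Finset.mul_sum,
            (hPk k).2 (f k), mul_one]
        have h6 : q k * Pk k (xst f k) (f k) *
            Q k (f k) (xst f k) (fun j => xst f j) (fun j => f j) = q k :=
          (Fintype.sum_eq_single (xst f) hterm0).symm.trans hsum
        have hPle := single_le_one' (fun c => (hPk k).1 c (f k))
          ((hPk k).2 (f k)) (xst f k)
        have hQle := single_le_one'
          (fun o' => (hQc k (f k) (xst f k)).isCorrelation.1 o' (fun j => f j))
          ((hQc k (f k) (xst f k)).isCorrelation.2 (fun j => f j))
          (fun j => xst f j)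
        have hP0 := (hPk k).1 (xst f k) (f k)
        have hQ0 := (hQc k (f k) (xst f k)).isCorrelation.1
          (fun j => xst f j) (fun j => f j)
        refine le_antisymm hPle ?_
        have hPQ : Pk k (xst f k) (f k) *
            Q k (f k) (xst f k) (fun j => xst f j) (fun j => f j) = 1 := by
          apply mul_left_cancel₀ (ne_of_gt hqk)
          rw [← mul_assoc, h6, mul_one]
        calc (1 : ℝ) = _ := hPQ.symm
          _ ≤ Pk k (xst f k) (f k) := mul_le_of_le_one_right hP0 hQle
      have hxdep : ∀ f f' : ∀ m, Ifam m, f k = f' k →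
          xst f k = xst f' k := by
        intro f f' hff
        by_contra hne
        have h1 := hkey f
        have h2 := hkey f'
        rw [← hff] at h2
        have h3 := Finset.add_le_sum (f := fun c => Pk k c (f k))
          (s := Finset.univ) (fun c _ => (hPk k).1 c (f k))
          (Finset.mem_univ (xst f k)) (Finset.mem_univ (xst f' k)) hne
        rw [(hPk k).2 (f k), h1, h2] at h3
        linarith
      have hfixconst : ∀ a : ∀ m, A m, xst (fun m _ => a m) = w a :=
        fun a => ((hw fun m _ => a m).choose_spec.2 (w a) rfl).symm
      have hconstk : ∀ a a' : ∀ m, A m, a k = a' k → w a k = w a' k := by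
        intro a a' hk
        calc w a k = xst (fun m _ => a m) k := by rw [hfixconst a]
          _ = xst (fun m _ => a' m) k := hxdep (fun m _ => a m) (fun m _ => a' m)
              (show (fun (_ : X k) => a k) = (fun (_ : X k) => a' k) by rw [hk])
          _ = w a' k := by rw [hfixconst a']
      have hconst : ∀ a a' : ∀ m, A m, w a k = w a' k := by
        intro a a'
        have h1 : w a k = w (Function.update a' k (a k)) k :=
          hconstk a _ (by rw [Function.update_self])
        have h2 : w (Function.update a' k (a k)) k = w a' k :=
          nss k _ a' fun j hj => Function.update_of_ne hj _ _
        exact h1.trans h2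
      refine ⟨k, w (fun m => Classical.arbitrary (A m)) k, fun aa => ?_⟩
      exact hconst _ _
    · -- (ii) each output-reduced function is a causal process function
      intro k _hk b
      have hvproc : IsProcessFunction (outputReducedFn w k b) :=
        isProcessFunction_outputReduced hw k b
      refine ⟨hvproc, ?_⟩
      intro Ifam Ofam instIF instIN instOF instON st hst0 hst1
      classical
      set v := outputReducedFn w k b with hvdef
      set O' : Fin n → Type := fun m => if h : m = k then PUnit else Ofam ⟨m, h⟩
        with hO'
      set I' : Fin n → Type := fun m => if h : m = k then PUnit else Ifam ⟨m, h⟩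
        with hI'
      have hO'k : O' k = PUnit := dif_pos rfl
      have hI'k : I' k = PUnit := dif_pos rfl
      have hO'ne : ∀ j : {j : Fin n // j ≠ k}, O' j.val = Ofam j :=
        fun j => dif_neg j.prop
      have hI'ne : ∀ j : {j : Fin n // j ≠ k}, I' j.val = Ifam j :=
        fun j => dif_neg j.prop
      haveI iO'F : ∀ m, Fintype (O' m) := by
        intro m
        by_cases h : m = k
        · subst h; rw [hO'k]; infer_instance
        · rw [show O' m = Ofam ⟨m, h⟩ from dif_neg h]; infer_instance
      haveI iI'F : ∀ m, Fintype (I' m) := by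
        intro m
        by_cases h : m = k
        · subst h; rw [hI'k]; infer_instance
        · rw [show I' m = Ifam ⟨m, h⟩ from dif_neg h]; infer_instance
      haveI iO'N : ∀ m, Nonempty (O' m) := by
        intro m
        by_cases h : m = k
        · subst h; rw [hO'k]; infer_instance
        · rw [show O' m = Ofam ⟨m, h⟩ from dif_neg h]; infer_instance
      haveI iI'N : ∀ m, Nonempty (I' m) := by
        intro m
        by_cases h : m = k
        · subst h; rw [hI'k]; infer_instance
        · rw [show I' m = Ifam ⟨m, h⟩ from dif_neg h]; infer_instance
      haveI hsubO : Subsingleton (O' k) := (Equiv.cast hO'k).subsingleton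
      haveI hsubI : Subsingleton (I' k) := (Equiv.cast hI'k).subsingleton
      set dO : O' k := cast hO'k.symm PUnit.unit with hdO
      set dI : I' k := cast hI'k.symm PUnit.unit with hdI
      set st' : ∀ m, A m → O' m → X m → I' m → ℝ := fun m a o x i =>
        if h : m = k then (if a = cast (congrArg A h).symm b then 1 else 0)
        else st ⟨m, h⟩ a (cast (dif_neg h) o) x (cast (dif_neg h) i)
        with hst'def
      have hst'k : ∀ (a : A k) (o : O' k) (x : X k) (i : I' k),
          st' k a o x i = if a = b then 1 else 0 := by
        intro a o x i
        rw [hst'def]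
        dsimp only
        rw [dif_pos rfl]
        rfl
      have hst'ne : ∀ (j : {j : Fin n // j ≠ k}) (a : A j.val) (o : O' j.val)
          (x : X j.val) (i : I' j.val),
          st' j.val a o x i
            = st j a (cast (hO'ne j) o) x (cast (hI'ne j) i) := by
        intro j a o x i
        rw [hst'def]
        dsimp only
        rw [dif_neg j.prop]
      have hst'0 : ∀ m a o x i, 0 ≤ st' m a o x i := by
        intro m a o x i
        rw [hst'def]
        dsimp only
        split
        · split <;> norm_num
        · exact hst0 _ _ _ _ _
      have hst'1 : ∀ m x i, ∑ a : A m, ∑ o : O' m, st' m a o x i = 1 := by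
        intro m x i
        by_cases h : m = k
        · subst h
          have hcard1 : Fintype.card (O' m) = 1 :=
            Fintype.card_eq_one_iff.mpr ⟨dO, fun y => Subsingleton.elim y dO⟩
          have hin : ∀ a : A m, (∑ o : O' m, st' m a o x i)
              = if a = b then 1 else 0 := by
            intro a
            rw [Finset.sum_congr rfl fun o _ => hst'k a o x i]
            rw [Finset.sum_const, Finset.card_univ, hcard1, one_smul]
          rw [Finset.sum_congr rfl fun a _ => hin a,
            Finset.sum_ite_eq' Finset.univ b (fun _ => (1 : ℝ))]
          simp
        · have hO'm : O' m = Ofam ⟨m, h⟩ := dif_neg h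
          have hI'm : I' m = Ifam ⟨m, h⟩ := dif_neg h
          have hin : ∀ a : A m, (∑ o : O' m, st' m a o x i)
              = ∑ o' : Ofam ⟨m, h⟩, st ⟨m, h⟩ a o' x (cast hI'm i) := by
            intro a
            rw [Finset.sum_congr rfl fun o _ => hst'ne ⟨m, h⟩ a o x i]
            exact Fintype.sum_equiv (Equiv.cast hO'm) _ _ fun o => by
              rw [Equiv.cast_apply]
          rw [Finset.sum_congr rfl fun a _ => hin a]
          exact hst1 ⟨m, h⟩ x (cast hI'm i)
      have hca := G I' O' st' hst'0 hst'1
      have hrem := isCausal_removeTrivial (Fintype.card (Fin n)) k dI dO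
        hsubI hsubO le_rfl (by rw [Fintype.card_fin]; exact hn) hca
      set fO : ∀ j : {j : Fin n // j ≠ k}, Ofam j ≃ O' j.val :=
        fun j => (Equiv.cast (hO'ne j)).symm with hfO
      set fI : ∀ j : {j : Fin n // j ≠ k}, Ifam j ≃ I' j.val :=
        fun j => (Equiv.cast (hI'ne j)).symm with hfI
      have htr := isCausal_transport (Fintype.card {j : Fin n // j ≠ k}) le_rfl
        hrem (Equiv.refl {j : Fin n // j ≠ k}) fI fO
      have hterm : ∀ (o' : ∀ m, O' m) (i' : ∀ m, I' m) (c : A k)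
          (a₀ : ∀ j : {j : Fin n // j ≠ k}, A j),
          (∏ m, st' m (extendAt k a₀ c m) (o' m)
            (component w m (fun j => extendAt k a₀ c j.val)) (i' m))
          = (if c = b then 1 else 0) *
            ∏ j : {j : Fin n // j ≠ k}, st j (a₀ j)
              (cast (hO'ne j) (o' j.val))
              (component v j (fun j' => a₀ j'))
              (cast (hI'ne j) (i' j.val)) := by
        intro o' i' c a₀
        by_cases hc : c = b
        · subst hc
          rw [if_pos rfl, one_mul, prod_split k]
          rw [extendAt_self k a₀ c, hst'k, if_pos rfl, one_mul]
          refine Finset.prod_congr rfl fun j _ => ?_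
          rw [extendAt_ne k a₀ c j, hst'ne j]
          congr 1
          calc component w j.val (fun j' => extendAt k a₀ c j'.val)
              = w (extendAt k a₀ c) j.val := component_eq nss j.val _
            _ = component v j (fun j' => a₀ j') :=
                (component_eq hvproc.nss j a₀).symm
        · rw [if_neg hc, zero_mul, prod_split k]
          rw [extendAt_self k a₀ c, hst'k, if_neg hc, zero_mul]
      have hgen : ∀ (o' : ∀ m, O' m) (i' : ∀ m, I' m),
          (∑ a : ∀ m, A m, ∏ m, st' m (a m) (o' m)
            (component w m (fun j => a j)) (i' m))
          = ∑ a₀ : ∀ j : {j : Fin n // j ≠ k}, A j,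
            ∏ j, st j (a₀ j) (cast (hO'ne j) (o' j.val))
              (component v j (fun j' => a₀ j'))
              (cast (hI'ne j) (i' j.val)) := by
        intro o' i'
        rw [sum_pi_split k]
        rw [Finset.sum_congr rfl fun c _ =>
          Finset.sum_congr rfl fun a₀ _ => hterm o' i' c a₀]
        rw [Finset.sum_congr rfl fun c _ => by
          rw [← Finset.mul_sum, ite_mul, one_mul, zero_mul]]
        rw [Finset.sum_ite_eq' Finset.univ b _]
        simp
      have hfinal : (fun (o : ∀ j : {j : Fin n // j ≠ k}, Ofam j)
          (i : ∀ j : {j : Fin n // j ≠ k}, Ifam j) =>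
          (∑ a : ∀ m, A m, ∏ m, st' m (a m)
            (extendAt k (Equiv.piCongr (Equiv.refl _) fO o) dO m)
            (component w m (fun j => a j))
            (extendAt k (Equiv.piCongr (Equiv.refl _) fI i) dI m)))
          = fun o i => ∑ a₀ : ∀ j : {j : Fin n // j ≠ k}, A j,
              ∏ j, st j (a₀ j) (o j)
                (component v j (fun j' => a₀ j')) (i j) := by
        funext o i
        rw [hgen _ _]
        refine Finset.sum_congr rfl fun a₀ _ => Finset.prod_congr rfl fun j _ => ?_
        have hOj : (extendAt k (Equiv.piCongr (Equiv.refl _) fO o) dO) j.val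
            = fO j (o j) := by
          rw [extendAt_ne k _ dO j]
          exact Equiv.piCongr_apply_apply
            (Z := fun j : {j : Fin n // j ≠ k} => O' j.val)
            (Equiv.refl _) fO o j
        have hIj : (extendAt k (Equiv.piCongr (Equiv.refl _) fI i) dI) j.val
            = fI j (i j) := by
          rw [extendAt_ne k _ dI j]
          exact Equiv.piCongr_apply_apply
            (Z := fun j : {j : Fin n // j ≠ k} => I' j.val)
            (Equiv.refl _) fI i j
        have hOc : cast (hO'ne j) (fO j (o j)) = o j := by
          rw [hfO]
          dsimp only
          rw [← Equiv.cast_symm, Equiv.cast_apply, cast_roundtrip]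
        have hIc : cast (hI'ne j) (fI j (i j)) = i j := by
          rw [hfI]
          dsimp only
          rw [← Equiv.cast_symm, Equiv.cast_apply, cast_roundtrip]
        rw [hOj, hIj, hOc, hIc]
      exact hfinal ▸ htr
  · rintro ⟨⟨k, x0, hconst⟩, hred⟩
    intro Ifam Ofam instIF instIN instOF instON st hst0 hst1
    classical
    set v : A k → ((∀ j : {j : Fin n // j ≠ k}, A j) →
        ∀ j : {j : Fin n // j ≠ k}, X j) := fun c => outputReducedFn w k c
      with hvdef
    have hv : ∀ c, IsProcessFunction (v c) := fun c =>
      isProcessFunction_outputReduced hw k c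
    -- the (n-1)-party correlations generated by the reduced processes
    set Pv : A k → ((∀ j : {j : Fin n // j ≠ k}, Ofam j) →
        (∀ j : {j : Fin n // j ≠ k}, Ifam j) → ℝ) := fun c o₀ i₀ =>
      ∑ a₀ : ∀ j : {j : Fin n // j ≠ k}, A j,
        ∏ j, st j.val (a₀ j) (o₀ j) (component (v c) j (fun j' => a₀ j')) (i₀ j)
      with hPvdef
    have hPc : ∀ c, IsCausal (Pv c) := by
      intro c
      exact (hred k ⟨x0, hconst⟩ c).2 (fun j => Ifam j.val) (fun j => Ofam j.val)
        (fun j a o x i => st j.val a o x i)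
        (fun j a o x i => hst0 j.val a o x i)
        (fun j x i => hst1 j.val x i)
    set SK : A k → Ofam k → Ifam k → ℝ := fun c oo ii => st k c oo x0 ii
      with hSKdef
    have hterm : ∀ (o : ∀ m, Ofam m) (i : ∀ m, Ifam m) (c : A k)
        (a₀ : ∀ j : {j : Fin n // j ≠ k}, A j),
        (∏ m, st m (extendAt k a₀ c m) (o m)
          (component w m (fun j => extendAt k a₀ c j.val)) (i m))
        = SK c (o k) (i k) *
          ∏ j : {j : Fin n // j ≠ k}, st j.val (a₀ j) (o j.val)
            (component (v c) j (fun j' => a₀ j')) (i j.val) := by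
      intro o i c a₀
      rw [prod_split k]
      congr 1
      · rw [extendAt_self k a₀ c, restrict_extendAt k a₀ c, hconst a₀]
      · refine Finset.prod_congr rfl fun j _ => ?_
        rw [extendAt_ne k a₀ c j]
        congr 1
        calc component w j.val (fun j' => extendAt k a₀ c j'.val)
            = w (extendAt k a₀ c) j.val := component_eq nss j.val _
          _ = component (v c) j (fun j' => a₀ j') :=
              (component_eq (hv c).nss j a₀).symm
    have hsplit : ∀ (o : ∀ m, Ofam m) (i : ∀ m, Ifam m),
        (∑ a : ∀ m, A m,
          ∏ m, st m (a m) (o m) (component w m (fun j => a j)) (i m))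
        = ∑ c : A k, SK c (o k) (i k) * Pv c (fun j => o j) (fun j => i j) := by
      intro o i
      rw [sum_pi_split k]
      refine Finset.sum_congr rfl fun c _ => ?_
      rw [Finset.sum_congr rfl fun a₀ _ => hterm o i c a₀, ← Finset.mul_sum]
    have hcorr := gen_isCorrelation hw st hst0 hst1
    -- ingredients of the causal decomposition
    have hcardO : ∀ m : Fin n, (0 : ℝ) < (Fintype.card (Ofam m) : ℝ) := by
      intro m
      have : 0 < Fintype.card (Ofam m) := Fintype.card_pos
      exact_mod_cast this
    set unif : ∀ m : Fin n, Ofam m → Ifam m → ℝ :=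
      fun m _ _ => (Fintype.card (Ofam m) : ℝ)⁻¹ with hunif
    have hunifcorr : ∀ m, (∀ o i, 0 ≤ unif m o i) ∧
        ∀ i : Ifam m, ∑ o : Ofam m, unif m o i = 1 := by
      intro m
      refine ⟨fun o i => by positivity, fun i => ?_⟩
      rw [Finset.sum_const, Finset.card_univ, nsmul_eq_mul,
        mul_inv_cancel₀ (ne_of_gt (hcardO m))]
    set junk : ∀ m : Fin n,
        ((∀ j : {j : Fin n // j ≠ m}, Ofam j) →
         (∀ j : {j : Fin n // j ≠ m}, Ifam j) → ℝ) := fun m o₀ i₀ =>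
      ∏ j : {j : Fin n // j ≠ m}, (Fintype.card (Ofam j.val) : ℝ)⁻¹ with hjunk
    have hjunkcaus : ∀ m : Fin n, IsCausal (junk m) := by
      intro m
      have hcs : Fintype.card {j : Fin n // j ≠ m} = n - 1 := by
        rw [card_subtype_ne m, Fintype.card_fin]
      refine isCausal_prod (Fintype.card {j : Fin n // j ≠ m}) le_rfl
        (by omega) (fun j _ _ => (Fintype.card (Ofam j.val) : ℝ)⁻¹)
        (fun j => ⟨fun o i => by positivity, fun i => ?_⟩)
      rw [Finset.sum_const, Finset.card_univ, nsmul_eq_mul,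
        mul_inv_cancel₀ (ne_of_gt (hcardO j.val))]
    set q : Fin n → ℝ := fun m => if m = k then 1 else 0 with hqdef
    set PkF : ∀ m : Fin n, Ofam m → Ifam m → ℝ :=
      Function.update (fun m (o : Ofam m) (i : Ifam m) => unif m o i) k
        (fun oo ii => ∑ c : A k, SK c oo ii) with hPkF
    set QF : ∀ m : Fin n, Ifam m → Ofam m →
        ((∀ j : {j : Fin n // j ≠ m}, Ofam j) →
         (∀ j : {j : Fin n // j ≠ m}, Ifam j) → ℝ) :=
      Function.update (fun m (_ : Ifam m) (_ : Ofam m) => junk m) k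
        (fun ii oo => if (∑ c : A k, SK c oo ii) = 0 then junk k
          else fun o₀ i₀ => ∑ c : A k,
            (SK c oo ii / (∑ c' : A k, SK c' oo ii)) * Pv c o₀ i₀) with hQF
    have hPkFk : PkF k = fun oo ii => ∑ c : A k, SK c oo ii := by
      rw [hPkF, Function.update_self]
    have hPkFne : ∀ m, m ≠ k → PkF m = fun o i => unif m o i := fun m hm => by
      rw [hPkF, Function.update_of_ne hm]
    have hQFk : QF k = fun ii oo => if (∑ c : A k, SK c oo ii) = 0 then junk k
          else fun o₀ i₀ => ∑ c : A k,
            (SK c oo ii / (∑ c' : A k, SK c' oo ii)) * Pv c o₀ i₀ := by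
      rw [hQF, Function.update_self]
    have hQFne : ∀ m, m ≠ k → QF m = fun _ _ => junk m := fun m hm => by
      rw [hQF, Function.update_of_ne hm]
    have hSK0 : ∀ oo ii c, 0 ≤ SK c oo ii := fun oo ii c => hst0 k c oo x0 ii
    have hSKsum0 : ∀ oo ii, 0 ≤ ∑ c : A k, SK c oo ii := fun oo ii =>
      Finset.sum_nonneg fun c _ => hSK0 oo ii c
    refine IsCausal.step (by rw [Fintype.card_fin]; exact hn) _ hcorr
      q ?_ ?_ PkF ?_ QF ?_ ?_
    · intro m; rw [hqdef]; dsimp only; split <;> norm_num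
    · rw [hqdef]
      dsimp only
      rw [Finset.sum_ite_eq' Finset.univ k (fun _ => (1 : ℝ))]
      simp
    · intro m
      by_cases hm : m = k
      · subst hm
        rw [hPkFk]
        refine ⟨fun o i => hSKsum0 o i, fun ii => ?_⟩
        rw [Finset.sum_comm]
        exact hst1 m x0 ii
      · rw [hPkFne m hm]
        exact hunifcorr m
    · intro m ii oo
      by_cases hm : m = k
      · subst hm
        rw [hQFk]
        dsimp only
        split
        · exact hjunkcaus m
        · rename_i hz
          have hspos : 0 < ∑ c : A m, SK c oo ii :=
            lt_of_le_of_ne (hSKsum0 oo ii) (Ne.symm hz)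
          refine isCausal_convex (Fintype.card {j : Fin n // j ≠ m}) le_rfl
            (fun c => SK c oo ii / (∑ c' : A m, SK c' oo ii)) Pv
            (fun c => div_nonneg (hSK0 oo ii c) (le_of_lt hspos)) ?_ hPc
          rw [← Finset.sum_div]
          exact div_self hz
      · rw [hQFne m hm]
        exact hjunkcaus m
    · intro o i
      rw [Fintype.sum_eq_single k (fun m hm => by
        rw [hqdef]
        dsimp only
        rw [if_neg hm, zero_mul, zero_mul])]
      rw [hsplit o i, hqdef]
      dsimp only
      rw [if_pos rfl, one_mul, hPkFk, hQFk]
      dsimp only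
      by_cases hz : (∑ c : A k, SK c (o k) (i k)) = 0
      · rw [if_pos hz, hz, zero_mul]
        refine Finset.sum_eq_zero fun c _ => ?_
        have := (Finset.sum_eq_zero_iff_of_nonneg
          (fun c _ => hSK0 (o k) (i k) c)).1 hz c (Finset.mem_univ c)
        rw [this, zero_mul]
      · rw [if_neg hz, Finset.mul_sum]
        refine Finset.sum_congr rfl fun c _ => ?_
        field_simp


end
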